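/- For all real numbers q > 1 and m > −1, Σ_{i=0}^{∞} Σ_{j=0}^{∞} P_m(i,j)² · π_m(i)/π_m(j) = q²/(q²−1); that is, the Hilbert–Schmidt norm of the operator P_m on ℓ²(π_m) equals (1 − q^{−2})^{−1/2}. -/

import Mathlib

noncomputable section

/-- The tridiagonal transition matrix `P_m` for real `q > 1`, `m > -1`. -/
def Pm (q m : ℝ) (i j : ℕ) : ℝ :=
  if j = i + 1 then q ^ (-1 - 2 * (i : ℝ) - m)
  else if j = i then
    1 - (1 - q ^ (-(i : ℝ))) * (1 - q ^ (-m - (i : ℝ))) - q ^ (-1 - 2 * (i : ℝ) - m)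
  else if i = j + 1 then (1 - q ^ (-(i : ℝ))) * (1 - q ^ (-m - (i : ℝ)))
  else 0

/-- Unnormalized weight `q^{-i(i+m)} / (η_i(q)·∏_{j=1}^{i}(1-q^{-m-j}))`. -/
def piWt (q m : ℝ) (i : ℕ) : ℝ :=
  q ^ (-((i : ℝ) * ((i : ℝ) + m))) /
    ((∏ j ∈ Finset.range i, (1 - q ^ (-((j : ℝ) + 1)))) *
      ∏ j ∈ Finset.range i, (1 - q ^ (-m - ((j : ℝ) + 1))))

/-- The stationary distribution `π_m`, normalized so that it sums to `1`. -/
def piM (q m : ℝ) (i : ℕ) : ℝ := (∑' k : ℕ, piWt q m k)⁻¹ * piWt q m i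

namespace Stmt6Aux

/-- `X`-form of the up transition probability `P_m(i,i+1)`. -/
def aa (q m : ℝ) (i : ℕ) : ℝ := q⁻¹ * q ^ (-m) * (q⁻¹ ^ i) ^ 2

/-- `X`-form of the down transition probability `P_m(i+1,i)`. -/
def bb (q m : ℝ) (i : ℕ) : ℝ := (1 - q⁻¹ ^ (i+1)) * (1 - q ^ (-m) * q⁻¹ ^ (i+1))

/-- `X`-form of the diagonal entry `P_m(i,i)`. -/
def cc (q m : ℝ) (i : ℕ) : ℝ :=
  1 - (1 - q⁻¹ ^ i) * (1 - q ^ (-m) * q⁻¹ ^ i) - q⁻¹ * q ^ (-m) * (q⁻¹ ^ i) ^ 2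

variable {q m : ℝ}

lemma hq0 (hq : 1 < q) : (0:ℝ) < q := lt_trans one_pos hq
lemma X_lt_one (hq : 1 < q) : q⁻¹ < 1 := inv_lt_one_of_one_lt₀ hq
lemma X_pos (hq : 1 < q) : 0 < q⁻¹ := inv_pos.2 (hq0 hq)
lemma A_pos (hq : 1 < q) : 0 < q ^ (-m) := Real.rpow_pos_of_pos (hq0 hq) _

lemma rpow_neg_nat (hq : 1 < q) (i : ℕ) : q ^ (-(i:ℝ)) = q⁻¹ ^ i := by
  rw [Real.rpow_neg (hq0 hq).le, Real.rpow_natCast, inv_pow]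

lemma rpow_neg_nat' (hq : 1 < q) (i : ℕ) : q ^ (-((i:ℝ)+1)) = q⁻¹ ^ (i+1) := by
  have h := rpow_neg_nat hq (i+1); push_cast at h; exact h

lemma rpow_mA (hq : 1 < q) (i : ℕ) :
    q ^ (-m - (i:ℝ)) = q ^ (-m) * q⁻¹ ^ i := by
  rw [sub_eq_add_neg, Real.rpow_add (hq0 hq), rpow_neg_nat hq]

lemma rpow_mA' (hq : 1 < q) (i : ℕ) :
    q ^ (-m - ((i:ℝ)+1)) = q ^ (-m) * q⁻¹ ^ (i+1) := by
  have h := rpow_mA (m := m) hq (i+1); push_cast at h; exact h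

lemma rpow_a (hq : 1 < q) (i : ℕ) :
    q ^ (-1 - 2*(i:ℝ) - m) = aa q m i := by
  have h : (-1 - 2*(i:ℝ) - m) = (-m) + (-1) + (-(((2*i : ℕ) : ℝ))) := by push_cast; ring
  rw [h, Real.rpow_add (hq0 hq), Real.rpow_add (hq0 hq), rpow_neg_nat hq (2*i),
    Real.rpow_neg_one, aa, pow_mul]
  ring

lemma AX_lt_one (hq : 1 < q) (hm : -1 < m) : q ^ (-m) * q⁻¹ < 1 := by
  have h : q ^ (-m) * q⁻¹ = q ^ (-m - 1) := by
    rw [sub_eq_add_neg, Real.rpow_add (hq0 hq), Real.rpow_neg_one]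
  rw [h]
  exact Real.rpow_lt_one_of_one_lt_of_neg hq (by linarith)

lemma one_sub_X_pow_pos (hq : 1 < q) (i : ℕ) : 0 < 1 - q⁻¹ ^ (i+1) := by
  have h1 : q⁻¹ ^ (i+1) < 1 :=
    pow_lt_one₀ (X_pos hq).le (X_lt_one hq) (Nat.succ_ne_zero i)
  linarith

lemma AX_pow_le (hq : 1 < q) (i : ℕ) : q ^ (-m) * q⁻¹ ^ (i+1) ≤ q ^ (-m) * q⁻¹ := by
  have h := pow_le_pow_of_le_one (X_pos hq).le (X_lt_one hq).le
    (Nat.one_le_iff_ne_zero.mpr (Nat.succ_ne_zero i))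
  calc q ^ (-m) * q⁻¹ ^ (i+1) ≤ q ^ (-m) * q⁻¹ ^ 1 :=
        mul_le_mul_of_nonneg_left h (A_pos hq).le
    _ = q ^ (-m) * q⁻¹ := by ring

lemma one_sub_AX_pow_pos (hq : 1 < q) (hm : -1 < m) (i : ℕ) :
    0 < 1 - q ^ (-m) * q⁻¹ ^ (i+1) := by
  have := AX_pow_le (m := m) hq i
  linarith [AX_lt_one hq hm]

lemma aa_pos (hq : 1 < q) (i : ℕ) : 0 < aa q m i := by
  unfold aa; positivity

lemma bb_pos (hq : 1 < q) (hm : -1 < m) (i : ℕ) : 0 < bb q m i :=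
  mul_pos (one_sub_X_pow_pos hq i) (one_sub_AX_pow_pos hq hm i)

lemma Pm_up (hq : 1 < q) (i : ℕ) : Pm q m i (i+1) = aa q m i := by
  have : Pm q m i (i+1) = q ^ (-1 - 2 * (i : ℝ) - m) := by simp [Pm]
  rw [this, rpow_a hq]

lemma Pm_diag (hq : 1 < q) (i : ℕ) : Pm q m i i = cc q m i := by
  have : Pm q m i i
      = 1 - (1 - q ^ (-(i : ℝ))) * (1 - q ^ (-m - (i : ℝ))) - q ^ (-1 - 2 * (i : ℝ) - m) := by
    unfold Pm; rw [if_neg (by omega), if_pos rfl]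
  rw [this, rpow_neg_nat hq, rpow_mA hq, rpow_a hq, cc]
  rfl

lemma Pm_down (hq : 1 < q) (i : ℕ) : Pm q m (i+1) i = bb q m i := by
  have h1 : Pm q m (i+1) i = (1 - q ^ (-((i:ℝ)+1))) * (1 - q ^ (-m - ((i:ℝ)+1))) := by
    unfold Pm
    rw [if_neg (by omega), if_neg (by omega), if_pos rfl]
    push_cast; ring_nf
  rw [h1, rpow_neg_nat' hq, rpow_mA' hq, bb]

lemma Pm_zero (q m : ℝ) {i j : ℕ} (h1 : j ≠ i+1) (h2 : j ≠ i) (h3 : i ≠ j+1) :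
    Pm q m i j = 0 := by
  unfold Pm
  rw [if_neg h1, if_neg h2, if_neg h3]

lemma eta_fac_pos (hq : 1 < q) (j : ℕ) : 0 < 1 - q ^ (-((j:ℝ)+1)) := by
  have hj : (0:ℝ) ≤ j := Nat.cast_nonneg j
  have : q ^ (-((j:ℝ)+1)) < 1 := Real.rpow_lt_one_of_one_lt_of_neg hq (by linarith)
  linarith

lemma eta2_fac_pos (hq : 1 < q) (hm : -1 < m) (j : ℕ) : 0 < 1 - q ^ (-m-((j:ℝ)+1)) := by
  have hj : (0:ℝ) ≤ j := Nat.cast_nonneg j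
  have : q ^ (-m-((j:ℝ)+1)) < 1 := Real.rpow_lt_one_of_one_lt_of_neg hq (by linarith)
  linarith

lemma piWt_pos (hq : 1 < q) (hm : -1 < m) (i : ℕ) : 0 < piWt q m i := by
  unfold piWt
  apply div_pos (Real.rpow_pos_of_pos (hq0 hq) _)
  exact mul_pos (Finset.prod_pos fun j _ => eta_fac_pos hq j)
    (Finset.prod_pos fun j _ => eta2_fac_pos hq hm j)

/-- Detailed balance: `π(i+1)·b_{i+1} = π(i)·a_i`. -/
lemma balance (hq : 1 < q) (hm : -1 < m) (i : ℕ) :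
    piWt q m (i+1) * bb q m i = piWt q m i * aa q m i := by
  have key : piWt q m (i+1) * ((1 - q ^ (-((i:ℝ)+1))) * (1 - q ^ (-m - ((i:ℝ)+1))))
      = piWt q m i * q ^ (-1 - 2*(i:ℝ) - m) := by
    unfold piWt
    rw [Finset.prod_range_succ, Finset.prod_range_succ]
    have he : (-((↑(i+1) : ℝ) * ((↑(i+1):ℝ) + m)))
        = (-((i : ℝ) * ((i : ℝ) + m))) + (-1 - 2*(i:ℝ) - m) := by push_cast; ring
    rw [he, Real.rpow_add (hq0 hq)]
    have h1 : (1 - q ^ (-((i:ℝ)+1))) ≠ 0 := (eta_fac_pos hq i).ne'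
    have h2 : (1 - q ^ (-m-((i:ℝ)+1))) ≠ 0 := (eta2_fac_pos hq hm i).ne'
    set D1 := ∏ j ∈ Finset.range i, (1 - q ^ (-((j : ℝ) + 1)))
    set D2 := ∏ j ∈ Finset.range i, (1 - q ^ (-m - ((j : ℝ) + 1)))
    set N0 := q ^ (-((i : ℝ) * ((i : ℝ) + m)))
    set a := q ^ (-1 - 2*(i:ℝ) - m)
    set f1 := 1 - q ^ (-((i:ℝ)+1))
    set f2 := 1 - q ^ (-m-((i:ℝ)+1))
    rw [show D1 * f1 * (D2 * f2) = (D1*D2)*(f1*f2) by ring, ← div_div,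
      div_mul_cancel₀ _ (mul_ne_zero h1 h2), mul_div_right_comm]
  rw [rpow_neg_nat' hq, rpow_mA' hq, rpow_a hq] at key
  exact key

lemma summable_piWt (hq : 1 < q) (hm : -1 < m) : Summable (piWt q m) := by
  have hX1 := X_lt_one hq
  have hX0 := X_pos hq
  have hrec : ∀ i, piWt q m (i+1)
      ≤ piWt q m i * ((q⁻¹ * q ^ (-m) / ((1-q⁻¹)*(1-q ^ (-m)*q⁻¹))) * (q⁻¹^2)^i) := by
    intro i
    have hb := bb_pos hq hm i
    have heq : piWt q m (i+1) = piWt q m i * aa q m i / bb q m i := by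
      field_simp
      linarith [balance hq hm i]
    rw [heq]
    have hδ : (0:ℝ) < (1-q⁻¹)*(1-q ^ (-m)*q⁻¹) := by
      have := AX_lt_one hq hm
      have : (0:ℝ) < 1 - q ^ (-m)*q⁻¹ := by linarith
      have h2 : (0:ℝ) < 1 - q⁻¹ := by linarith
      exact mul_pos h2 this
    have hδle : (1-q⁻¹)*(1-q ^ (-m)*q⁻¹) ≤ bb q m i := by
      unfold bb
      have h1 : q⁻¹ ^ (i+1) ≤ q⁻¹ := by
        calc q⁻¹ ^ (i+1) ≤ q⁻¹ ^ 1 := pow_le_pow_of_le_one hX0.le hX1.le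
              (Nat.one_le_iff_ne_zero.mpr (Nat.succ_ne_zero i))
          _ = q⁻¹ := pow_one _
      have h2 := AX_pow_le (m := m) hq i
      have h3 := one_sub_X_pow_pos hq i
      have h4 := one_sub_AX_pow_pos hq hm i
      nlinarith
    calc piWt q m i * aa q m i / bb q m i
        ≤ piWt q m i * aa q m i / ((1-q⁻¹)*(1-q ^ (-m)*q⁻¹)) := by
          apply div_le_div_of_nonneg_left _ hδ hδle
          exact mul_nonneg (piWt_pos hq hm i).le (aa_pos hq i).le
      _ = piWt q m i * ((q⁻¹ * q ^ (-m) / ((1-q⁻¹)*(1-q ^ (-m)*q⁻¹))) * (q⁻¹^2)^i) := by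
          unfold aa
          rw [← pow_right_comm]
          field_simp
  -- ratio test
  set K := q⁻¹ * q ^ (-m) / ((1-q⁻¹)*(1-q ^ (-m)*q⁻¹)) with hK
  have hY0 : (0:ℝ) ≤ q⁻¹^2 := by positivity
  have hY1 : q⁻¹^2 < 1 := by nlinarith
  have htend : Filter.Tendsto (fun i : ℕ => K * (q⁻¹^2)^i) Filter.atTop (nhds 0) := by
    have := tendsto_pow_atTop_nhds_zero_of_lt_one hY0 hY1
    simpa using this.const_mul K
  have hev : ∀ᶠ i in Filter.atTop, K * (q⁻¹^2)^i < 1/2 :=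
    htend.eventually (Iio_mem_nhds (by norm_num))
  apply summable_of_ratio_norm_eventually_le (r := 1/2) (by norm_num)
  filter_upwards [hev] with i hi
  have h1 : piWt q m (i+1) ≤ piWt q m i * (1/2) := by
    calc piWt q m (i+1) ≤ piWt q m i * (K * (q⁻¹^2)^i) := hrec i
      _ ≤ piWt q m i * (1/2) :=
          mul_le_mul_of_nonneg_left (le_of_lt hi) (piWt_pos hq hm i).le
  rw [Real.norm_of_nonneg (piWt_pos hq hm (i+1)).le,
    Real.norm_of_nonneg (piWt_pos hq hm i).le]
  linarith

lemma Z_pos (hq : 1 < q) (hm : -1 < m) : 0 < ∑' k : ℕ, piWt q m k :=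
  Summable.tsum_pos (summable_piWt hq hm) (fun i => (piWt_pos hq hm i).le) 0 (piWt_pos hq hm 0)

lemma piM_div (hq : 1 < q) (hm : -1 < m) (i j : ℕ) :
    piM q m i / piM q m j = piWt q m i / piWt q m j := by
  unfold piM
  rw [mul_div_mul_left _ _ (inv_ne_zero (Z_pos hq hm).ne')]

lemma ratio_up (hq : 1 < q) (hm : -1 < m) (i : ℕ) :
    piM q m i / piM q m (i+1) = bb q m i / aa q m i := by
  rw [piM_div hq hm]
  rw [div_eq_div_iff (piWt_pos hq hm (i+1)).ne' (aa_pos hq i).ne']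
  linarith [balance hq hm i]

lemma ratio_down (hq : 1 < q) (hm : -1 < m) (i : ℕ) :
    piM q m (i+1) / piM q m i = aa q m i / bb q m i := by
  rw [piM_div hq hm]
  rw [div_eq_div_iff (piWt_pos hq hm i).ne' (bb_pos hq hm i).ne']
  linarith [balance hq hm i]

/-- The inner-sum summand. -/
def F (q m : ℝ) (i j : ℕ) : ℝ := Pm q m i j ^ 2 * (piM q m i / piM q m j)

lemma F_up (hq : 1 < q) (hm : -1 < m) (i : ℕ) :
    F q m i (i+1) = aa q m i * bb q m i := by
  unfold F
  rw [Pm_up hq, ratio_up hq hm]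
  have ha := (aa_pos (m := m) hq i).ne'
  field_simp

lemma F_down (hq : 1 < q) (hm : -1 < m) (i : ℕ) :
    F q m (i+1) i = aa q m i * bb q m i := by
  unfold F
  rw [Pm_down hq, ratio_down hq hm]
  have hb := (bb_pos hq hm i).ne'
  field_simp

lemma F_diag (hq : 1 < q) (hm : -1 < m) (i : ℕ) :
    F q m i i = cc q m i ^ 2 := by
  unfold F
  have hpos : piM q m i ≠ 0 := by
    unfold piM
    exact (mul_pos (inv_pos.2 (Z_pos hq hm)) (piWt_pos hq hm i)).ne'
  rw [Pm_diag hq, div_self hpos, mul_one]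

lemma F_zero (q m : ℝ) {i j : ℕ} (h1 : j ≠ i+1) (h2 : j ≠ i) (h3 : i ≠ j+1) :
    F q m i j = 0 := by
  unfold F
  rw [Pm_zero q m h1 h2 h3]
  ring

lemma inner0 (hq : 1 < q) (hm : -1 < m) :
    ∑' j : ℕ, F q m 0 j = cc q m 0 ^ 2 + aa q m 0 * bb q m 0 := by
  rw [tsum_eq_sum (s := {0, 1}) (by
    intro j hj
    simp only [Finset.mem_insert, Finset.mem_singleton] at hj
    push_neg at hj
    exact F_zero q m (by omega) (by omega) (by omega))]
  rw [Finset.sum_pair (by norm_num), F_diag hq hm, F_up hq hm]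

lemma innerS (hq : 1 < q) (hm : -1 < m) (k : ℕ) :
    ∑' j : ℕ, F q m (k+1) j
      = (cc q m (k+1) ^ 2 + aa q m (k+1) * bb q m (k+1)) + aa q m k * bb q m k := by
  rw [tsum_eq_sum (s := {k, k+1, k+2}) (by
    intro j hj
    simp only [Finset.mem_insert, Finset.mem_singleton] at hj
    push_neg at hj
    exact F_zero q m (by omega) (by omega) (by omega))]
  rw [Finset.sum_insert (by simp), Finset.sum_pair (by omega),
    F_down hq hm, F_diag hq hm, F_up hq hm]
  ring



lemma geom_pow_lt_one (hq : 1 < q) {k : ℕ} (hk : k ≠ 0) : q⁻¹ ^ k < 1 :=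
  pow_lt_one₀ (X_pos hq).le (X_lt_one hq) hk

lemma sgeom (hq : 1 < q) (k : ℕ) (hk : k ≠ 0) : Summable (fun i : ℕ => (q⁻¹ ^ k) ^ i) :=
  summable_geometric_of_lt_one (by positivity) (geom_pow_lt_one hq hk)

lemma id_h (hq : 1 < q) (i : ℕ) :
    aa q m i * bb q m i
      = (q ^ (-m) * q⁻¹) * (q⁻¹^2)^i - (q ^ (-m)*(1+q ^ (-m))*q⁻¹^2) * (q⁻¹^3)^i
        + ((q ^ (-m))^2*q⁻¹^3) * (q⁻¹^4)^i := by
  unfold aa bb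
  rw [pow_right_comm q⁻¹ 2 i, pow_right_comm q⁻¹ 3 i, pow_right_comm q⁻¹ 4 i, pow_succ]
  set A := q ^ (-m) with hA
  ring

lemma id_ch (hq : 1 < q) (i : ℕ) :
    cc q m i ^ 2 + aa q m i * bb q m i
      = ((1+q ^ (-m))^2 + q ^ (-m)*q⁻¹) * (q⁻¹^2)^i
        - (q ^ (-m)*(1+q ^ (-m))*(2+2*q⁻¹+q⁻¹^2)) * (q⁻¹^3)^i
        + ((q ^ (-m))^2*((1+q⁻¹)^2+q⁻¹^3)) * (q⁻¹^4)^i := by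
  unfold aa bb cc
  rw [pow_right_comm q⁻¹ 2 i, pow_right_comm q⁻¹ 3 i, pow_right_comm q⁻¹ 4 i, pow_succ]
  set A := q ^ (-m) with hA
  ring

lemma sum_h (hq : 1 < q) (hm : -1 < m) : Summable (fun i => aa q m i * bb q m i) := by
  apply Summable.congr (f := fun i : ℕ =>
    (q ^ (-m) * q⁻¹) * (q⁻¹^2)^i - (q ^ (-m)*(1+q ^ (-m))*q⁻¹^2) * (q⁻¹^3)^i
      + ((q ^ (-m))^2*q⁻¹^3) * (q⁻¹^4)^i)
  · exact (((sgeom hq 2 (by norm_num)).mul_left _).sub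
      ((sgeom hq 3 (by norm_num)).mul_left _)).add ((sgeom hq 4 (by norm_num)).mul_left _)
  · intro i; exact (id_h hq i).symm

lemma sum_ch (hq : 1 < q) (hm : -1 < m) :
    Summable (fun i => cc q m i ^ 2 + aa q m i * bb q m i) := by
  apply Summable.congr (f := fun i : ℕ =>
    ((1+q ^ (-m))^2 + q ^ (-m)*q⁻¹) * (q⁻¹^2)^i
      - (q ^ (-m)*(1+q ^ (-m))*(2+2*q⁻¹+q⁻¹^2)) * (q⁻¹^3)^i
      + ((q ^ (-m))^2*((1+q⁻¹)^2+q⁻¹^3)) * (q⁻¹^4)^i)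
  · exact (((sgeom hq 2 (by norm_num)).mul_left _).sub
      ((sgeom hq 3 (by norm_num)).mul_left _)).add ((sgeom hq 4 (by norm_num)).mul_left _)
  · intro i; exact (id_ch hq i).symm

lemma tsum_main (hq : 1 < q) (hm : -1 < m) :
    ∑' i : ℕ, ∑' j : ℕ, F q m i j = q ^ 2 / (q ^ 2 - 1) := by
  set D : ℕ → ℝ := fun i => if i = 0 then 0 else aa q m (i-1) * bb q m (i-1) with hD
  have hfun : (fun i : ℕ => ∑' j : ℕ, F q m i j)
      = fun i => (cc q m i ^ 2 + aa q m i * bb q m i) + D i := by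
    funext i
    cases i with
    | zero => rw [inner0 hq hm]; simp [hD]
    | succ k => rw [innerS hq hm k]; simp [hD]
  rw [hfun]
  have hDshift : (fun i : ℕ => D (i+1)) = fun i => aa q m i * bb q m i := by
    funext i; simp [hD]
  have sD : Summable D := by
    rw [← summable_nat_add_iff 1, hDshift]
    exact sum_h hq hm
  rw [Summable.tsum_add (sum_ch hq hm) sD]
  have hDsum : ∑' i, D i = ∑' i, aa q m i * bb q m i := by
    rw [Summable.tsum_eq_zero_add sD, hDshift]
    simp [hD]
  rw [hDsum, ← Summable.tsum_add (sum_ch hq hm) (sum_h hq hm)]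
  have hpt : ∀ i : ℕ, ((cc q m i ^ 2 + aa q m i * bb q m i) + aa q m i * bb q m i)
      = (((1+q ^ (-m))^2 + q ^ (-m)*q⁻¹) + q ^ (-m) * q⁻¹) * (q⁻¹^2)^i
        - ((q ^ (-m)*(1+q ^ (-m))*(2+2*q⁻¹+q⁻¹^2)) + (q ^ (-m)*(1+q ^ (-m))*q⁻¹^2)) * (q⁻¹^3)^i
        + (((q ^ (-m))^2*((1+q⁻¹)^2+q⁻¹^3)) + ((q ^ (-m))^2*q⁻¹^3)) * (q⁻¹^4)^i := by
    intro i
    rw [id_ch hq i, id_h hq i]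
    set A := q ^ (-m) with hA
    ring
  rw [tsum_congr hpt]
  have s2 : Summable (fun i : ℕ =>
      (((1+q ^ (-m))^2 + q ^ (-m)*q⁻¹) + q ^ (-m) * q⁻¹) * (q⁻¹^2)^i) :=
    (sgeom hq 2 (by norm_num)).mul_left _
  have s3 : Summable (fun i : ℕ =>
      ((q ^ (-m)*(1+q ^ (-m))*(2+2*q⁻¹+q⁻¹^2)) + (q ^ (-m)*(1+q ^ (-m))*q⁻¹^2)) * (q⁻¹^3)^i) :=
    (sgeom hq 3 (by norm_num)).mul_left _
  have s4 : Summable (fun i : ℕ =>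
      (((q ^ (-m))^2*((1+q⁻¹)^2+q⁻¹^3)) + ((q ^ (-m))^2*q⁻¹^3)) * (q⁻¹^4)^i) :=
    (sgeom hq 4 (by norm_num)).mul_left _
  rw [Summable.tsum_add (s2.sub s3) s4, Summable.tsum_sub s2 s3, tsum_mul_left, tsum_mul_left, tsum_mul_left,
    tsum_geometric_of_lt_one (by positivity) (geom_pow_lt_one hq (by norm_num : (2:ℕ) ≠ 0)),
    tsum_geometric_of_lt_one (by positivity) (geom_pow_lt_one hq (by norm_num : (3:ℕ) ≠ 0)),
    tsum_geometric_of_lt_one (by positivity) (geom_pow_lt_one hq (by norm_num : (4:ℕ) ≠ 0))]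
  have hqne : q ≠ 0 := (hq0 hq).ne'
  have h2 : 1 - q⁻¹^2 ≠ 0 := (by linarith [geom_pow_lt_one hq (by norm_num : (2:ℕ) ≠ 0)] : (0:ℝ) < 1 - q⁻¹^2).ne'
  have h3 : 1 - q⁻¹^3 ≠ 0 := (by linarith [geom_pow_lt_one hq (by norm_num : (3:ℕ) ≠ 0)] : (0:ℝ) < 1 - q⁻¹^3).ne'
  have h4 : 1 - q⁻¹^4 ≠ 0 := (by linarith [geom_pow_lt_one hq (by norm_num : (4:ℕ) ≠ 0)] : (0:ℝ) < 1 - q⁻¹^4).ne'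
  have hg2 : (1:ℝ) < q^2 := one_lt_pow₀ hq (by norm_num)
  have hg3 : (1:ℝ) < q^3 := one_lt_pow₀ hq (by norm_num)
  have hg4 : (1:ℝ) < q^4 := one_lt_pow₀ hq (by norm_num)
  have hq2 : q^2 - 1 ≠ 0 := by linarith
  have hq3 : q^3 - 1 ≠ 0 := by linarith
  have hq4 : q^4 - 1 ≠ 0 := by linarith
  have e2 : (1 - q⁻¹^2)⁻¹ = q^2/(q^2-1) := by
    rw [show 1 - q⁻¹^2 = (q^2-1)/q^2 by field_simp, inv_div]
  have e3 : (1 - q⁻¹^3)⁻¹ = q^3/(q^3-1) := by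
    rw [show 1 - q⁻¹^3 = (q^3-1)/q^3 by field_simp, inv_div]
  have e4 : (1 - q⁻¹^4)⁻¹ = q^4/(q^4-1) := by
    rw [show 1 - q⁻¹^4 = (q^4-1)/q^4 by field_simp, inv_div]
  rw [e2, e3, e4]
  set A := q ^ (-m) with hA
  field_simp
  ring

end Stmt6Aux

theorem stmt6 (q m : ℝ) (hq : 1 < q) (hm : -1 < m) :
    (∑' i : ℕ, ∑' j : ℕ, Pm q m i j ^ 2 * (piM q m i / piM q m j)) = q ^ 2 / (q ^ 2 - 1) ∧
    Real.sqrt (∑' i : ℕ, ∑' j : ℕ, Pm q m i j ^ 2 * (piM q m i / piM q m j))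
      = (1 - q ^ (-2 : ℝ)) ^ (-(1 / 2) : ℝ) := by
  have h1 : (∑' i : ℕ, ∑' j : ℕ, Pm q m i j ^ 2 * (piM q m i / piM q m j))
      = q ^ 2 / (q ^ 2 - 1) := Stmt6Aux.tsum_main hq hm
  refine ⟨h1, ?_⟩
  rw [h1]
  have hq0 : (0:ℝ) < q := lt_trans one_pos hq
  have hq2 : (0:ℝ) < q^2 - 1 := by nlinarith
  have hb : 1 - q ^ (-2 : ℝ) = (q^2-1)/q^2 := by
    rw [show ((-2:ℝ)) = -((2:ℕ):ℝ) by norm_num, Real.rpow_neg hq0.le, Real.rpow_natCast]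
    field_simp
  rw [hb, Real.rpow_neg (by positivity), ← Real.sqrt_eq_rpow, ← Real.sqrt_inv]
  congr 1
  rw [inv_div]
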